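/- Let X_a, X_b be linear subspaces of ℝⁿ with X_a ∩ X_b = {0}, let π^a, π^b denote the orthogonal projections onto X_a^⊥, X_b^⊥, and let μ > dim X_a. Let ψ : X_a^⊥ → ℂ be a Schwartz function and let V : X_b^⊥ → ℂ be a measurable function satisfying |V(w)| ≤ δ(1+‖w‖)^{−μ} for all w ∈ X_b^⊥ and some δ > 0. Then the function x ↦ V(π^b x) |ψ(π^a x)|² is Lebesgue integrable on ℝⁿ, and the effective interaction V_eff : X_a → ℂ defined by V_eff(x_a) = ∫_{X_a^⊥} V(π^b(x_a + w)) |ψ(w)|² dw is a well-defined Lebesgue integrable function on X_a. -/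

import Mathlib

open Submodule MeasureTheory


lemma my_peetre {E : Type*} [SeminormedAddCommGroup E] {μ : ℝ} (hμ : 0 ≤ μ) (u v : E) :
    (1 + ‖u + v‖) ^ (-μ) ≤ (1 + ‖u‖) ^ (-μ) * (1 + ‖v‖) ^ μ := by
  have h1 : (0:ℝ) < 1 + ‖u + v‖ := by positivity
  have h2 : (0:ℝ) < 1 + ‖u‖ := by positivity
  have h3 : (0:ℝ) < 1 + ‖v‖ := by positivity
  have hkey : 1 + ‖u‖ ≤ (1 + ‖u + v‖) * (1 + ‖v‖) := by
    have : ‖u‖ ≤ ‖u + v‖ + ‖v‖ := by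
      calc ‖u‖ = ‖(u + v) + (-v)‖ := by rw [add_neg_cancel_right]
      _ ≤ ‖u + v‖ + ‖-v‖ := norm_add_le _ _
      _ = ‖u + v‖ + ‖v‖ := by rw [norm_neg]
    nlinarith [norm_nonneg (u + v), norm_nonneg v]
  have hdiv : (1 + ‖u‖) / (1 + ‖v‖) ≤ 1 + ‖u + v‖ := by
    rw [div_le_iff₀ h3]; linarith
  have := Real.rpow_le_rpow_of_nonpos (by positivity : (0:ℝ) < (1 + ‖u‖) / (1 + ‖v‖)) hdiv
    (neg_nonpos.mpr hμ)
  calc (1 + ‖u + v‖) ^ (-μ) ≤ ((1 + ‖u‖) / (1 + ‖v‖)) ^ (-μ) := this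
    _ = (1 + ‖u‖) ^ (-μ) * (1 + ‖v‖) ^ μ := by
        rw [Real.div_rpow h2.le h3.le, Real.rpow_neg h3.le μ]; field_simp

lemma my_pow_bound {t : ℝ} (ht : 0 ≤ t) (k : ℕ) : (1 + t) ^ k ≤ 2 ^ k * (1 + t ^ k) := by
  rcases le_total t 1 with h | h
  · calc (1 + t) ^ k ≤ 2 ^ k := by
          apply pow_le_pow_left₀ (by linarith) (by linarith)
      _ ≤ 2 ^ k * (1 + t ^ k) := by nlinarith [pow_nonneg ht k, pow_pos (by norm_num : (0:ℝ) < 2) k]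
  · calc (1 + t) ^ k ≤ (2 * t) ^ k := by
          apply pow_le_pow_left₀ (by linarith) (by linarith)
      _ = 2 ^ k * t ^ k := mul_pow 2 t k
      _ ≤ 2 ^ k * (1 + t ^ k) := by nlinarith [pow_pos (by norm_num : (0:ℝ) < 2) k, pow_nonneg ht k]


set_option maxHeartbeats 1000000 in
lemma my_measurePreserving_add (n : ℕ) (Xa : Submodule ℝ (EuclideanSpace ℝ (Fin n))) :
    MeasurePreserving (fun z : Xa × Xaᗮ => (z.1 : EuclideanSpace ℝ (Fin n)) + (z.2 : EuclideanSpace ℝ (Fin n)))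
      ((volume : Measure Xa).prod (volume : Measure Xaᗮ)) volume := by
  classical
  set E := EuclideanSpace ℝ (Fin n)
  set p := Module.finrank ℝ Xa
  set q := Module.finrank ℝ Xaᗮ
  let ba := stdOrthonormalBasis ℝ Xa
  let bw := stdOrthonormalBasis ℝ Xaᗮ
  let v : Fin p ⊕ Fin q → E := Sum.elim (fun i => (ba i : E)) fun j => (bw j : E)
  have hv_on : Orthonormal ℝ v := by
    constructor
    · rintro (i | j)
      · exact ba.orthonormal.1 i
      · exact bw.orthonormal.1 j
    · rintro (i | j) (k | l) hne
      · have : i ≠ k := by simpa using hne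
        simpa [v, Submodule.coe_inner] using ba.orthonormal.2 this
      · exact Submodule.inner_right_of_mem_orthogonal (ba i).2 (bw l).2
      · exact Submodule.inner_left_of_mem_orthogonal (ba k).2 (bw j).2
      · have : j ≠ l := by simpa using hne
        simpa [v, Submodule.coe_inner] using bw.orthonormal.2 this
  have span_coe : ∀ (K : Submodule ℝ E) (m : ℕ) (b : OrthonormalBasis (Fin m) ℝ K),
      Submodule.span ℝ (Set.range fun i => (b i : E)) = K := by
    intro K m b
    have h1 : (Set.range fun i => (b i : E)) = ⇑K.subtype '' Set.range ⇑b := by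
      rw [← Set.range_comp]; rfl
    rw [h1, ← Submodule.map_span, ← b.coe_toBasis, b.toBasis.span_eq, Submodule.map_subtype_top]
  have hv_sp : ⊤ ≤ Submodule.span ℝ (Set.range v) := by
    rw [Set.Sum.elim_range, Submodule.span_union, span_coe Xa p ba, span_coe Xaᗮ q bw,
      Submodule.sup_orthogonal_of_hasOrthogonalProjection]
  let B : OrthonormalBasis (Fin p ⊕ Fin q) ℝ E := OrthonormalBasis.mk hv_on hv_sp
  have m1 := (ba.measurePreserving_repr).prod (bw.measurePreserving_repr)
  have m2 := (EuclideanSpace.volume_preserving_symm_measurableEquiv_toLp (Fin p)).prod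
    (EuclideanSpace.volume_preserving_symm_measurableEquiv_toLp (Fin q))
  have m3 := volume_measurePreserving_sumPiEquivProdPi_symm (fun _ : Fin p ⊕ Fin q => ℝ)
  have m4 := (EuclideanSpace.volume_preserving_symm_measurableEquiv_toLp (Fin p ⊕ Fin q)).symm
  have m5 := B.measurePreserving_repr_symm
  have hc := m5.comp (m4.comp (m3.comp (m2.comp m1)))
  convert hc using 1
  funext z
  apply B.repr.injective
  rw [Function.comp_apply]
  rw [LinearIsometryEquiv.apply_symm_apply]
  ext i
  have hco : ∀ x : E, B.repr x i = inner ℝ (v i) x := fun x => by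
    rw [B.repr_apply_apply]
    congr 1
    simp [B, OrthonormalBasis.coe_mk]
  rw [hco]
  simp only [Function.comp_apply, Prod.map_apply, MeasurableEquiv.symm_symm, MeasurableEquiv.coe_toLp,
    MeasurableEquiv.coe_toLp_symm, MeasurableEquiv.coe_sumPiEquivProdPi_symm,
    Equiv.sumPiEquivProdPi_symm_apply, PiLp.toLp_apply]
  cases i with
  | inl i =>
      simp only [v, Sum.elim_inl]
      rw [inner_add_right, Submodule.inner_right_of_mem_orthogonal (ba i).2 z.2.2, add_zero,
        ← Submodule.coe_inner, ← ba.repr_apply_apply]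
      simp
  | inr j =>
      simp only [v, Sum.elim_inr]
      rw [inner_add_right, Submodule.inner_left_of_mem_orthogonal z.1.2 (bw j).2, zero_add,
        ← Submodule.coe_inner, ← bw.repr_apply_apply]
      simp


set_option maxHeartbeats 2000000 in
/-- Integrability of the intercluster interaction against the square of a bound state,
and integrability of the resulting effective interaction on `X_a`, when the decay rate
`μ` exceeds `dim X_a`. -/
theorem effective_interaction_integrable (n : ℕ)
    (Xa Xb : Submodule ℝ (EuclideanSpace ℝ (Fin n))) (hXab : Xa ⊓ Xb = ⊥)
    (μ : ℝ) (hμ : (Module.finrank ℝ Xa : ℝ) < μ)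
    (ψ : SchwartzMap Xaᗮ ℂ)
    (δ : ℝ) (hδ : 0 < δ)
    (V : Xbᗮ → ℂ) (hVmeas : Measurable V)
    (hV : ∀ w : Xbᗮ, ‖V w‖ ≤ δ * (1 + ‖w‖) ^ (-μ))
    (Veff : Xa → ℂ)
    (hVeff : ∀ xa : Xa, Veff xa =
      ∫ w : Xaᗮ,
        V (orthogonalProjection Xbᗮ ((xa : EuclideanSpace ℝ (Fin n)) + w)) *
          (‖ψ w‖ : ℂ) ^ 2) :
    Integrable (fun x : EuclideanSpace ℝ (Fin n) =>
        V (orthogonalProjection Xbᗮ x) * (‖ψ (orthogonalProjection Xaᗮ x)‖ : ℂ) ^ 2) ∧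
    (∀ xa : Xa, Integrable (fun w : Xaᗮ =>
        V (orthogonalProjection Xbᗮ ((xa : EuclideanSpace ℝ (Fin n)) + w)) *
          (‖ψ w‖ : ℂ) ^ 2)) ∧
    Integrable Veff := by
  classical
  have hμ0 : 0 < μ := lt_of_le_of_lt (Nat.cast_nonneg _) hμ
  -- the coercion-plus-orthogonal-projection map restricted to `Xa` is injective
  obtain ⟨K, hK0, hK⟩ := LinearMap.exists_antilipschitzWith
    (((orthogonalProjection Xbᗮ).toLinearMap).comp Xa.subtype) (by
      rw [LinearMap.ker_eq_bot']
      intro a ha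
      have h1 : (a : EuclideanSpace ℝ (Fin n)) ∈ Xbᗮᗮ := by
        rw [← orthogonalProjection_eq_zero_iff]
        simpa using ha
      rw [Submodule.orthogonal_orthogonal] at h1
      have h2 : (a : EuclideanSpace ℝ (Fin n)) ∈ Xa ⊓ Xb := ⟨a.2, h1⟩
      rw [hXab] at h2
      exact Subtype.ext (by simpa using h2))
  have hKpos : (0:ℝ) < (K:ℝ) := by exact_mod_cast hK0
  have hKnorm : ∀ a : Xa, ‖a‖ ≤ (K:ℝ) *
      ‖(orthogonalProjection Xbᗮ (a : EuclideanSpace ℝ (Fin n)) : Xbᗮ)‖ := by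
    intro a
    simpa using hK.le_mul_norm (by simp) a
  set m : ℝ := min 1 (K:ℝ)⁻¹ with hmdef
  have hm0 : 0 < m := lt_min one_pos (by positivity)
  have hma : ∀ a : Xa, m * (1 + ‖a‖) ≤
      1 + ‖(orthogonalProjection Xbᗮ (a : EuclideanSpace ℝ (Fin n)) : Xbᗮ)‖ := by
    intro a
    have h1 := hKnorm a
    have h2 : (K:ℝ)⁻¹ * ‖a‖ ≤
        ‖(orthogonalProjection Xbᗮ (a : EuclideanSpace ℝ (Fin n)) : Xbᗮ)‖ := by
      rw [inv_mul_le_iff₀ hKpos]; linarith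
    have hm1 : m ≤ 1 := min_le_left _ _
    have hm2 : m ≤ (K:ℝ)⁻¹ := min_le_right _ _
    nlinarith [norm_nonneg a,
      norm_nonneg (orthogonalProjection Xbᗮ (a : EuclideanSpace ℝ (Fin n)))]
  set g : Xaᗮ → ℝ := fun w => (1 + ‖w‖) ^ μ * ‖ψ w‖ ^ 2 with hgdef
  have hg0 : ∀ w, 0 ≤ g w := fun w => by positivity
  -- the key pointwise bound
  have hbound : ∀ (a : Xa) (w : Xaᗮ),
      ‖V (orthogonalProjection Xbᗮ ((a : EuclideanSpace ℝ (Fin n)) + w)) * (‖ψ w‖ : ℂ) ^ 2‖ ≤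
        (δ * m ^ (-μ)) * ((1 + ‖a‖) ^ (-μ) * g w) := by
    intro a w
    have hnorm : ‖V (orthogonalProjection Xbᗮ ((a : EuclideanSpace ℝ (Fin n)) + w)) *
        (‖ψ w‖ : ℂ) ^ 2‖ =
        ‖V (orthogonalProjection Xbᗮ ((a : EuclideanSpace ℝ (Fin n)) + w))‖ * ‖ψ w‖ ^ 2 := by
      rw [norm_mul, norm_pow, Complex.norm_real, Real.norm_of_nonneg (norm_nonneg _)]
    rw [hnorm]
    have hsplit : orthogonalProjection Xbᗮ ((a : EuclideanSpace ℝ (Fin n)) + w) =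
        orthogonalProjection Xbᗮ (a : EuclideanSpace ℝ (Fin n)) +
        orthogonalProjection Xbᗮ (w : EuclideanSpace ℝ (Fin n)) := map_add _ _ _
    have hP : (1 + ‖orthogonalProjection Xbᗮ ((a : EuclideanSpace ℝ (Fin n)) + w)‖) ^ (-μ) ≤
        (m ^ (-μ) * (1 + ‖a‖) ^ (-μ)) * (1 + ‖w‖) ^ μ := by
      have e1 : (1 + ‖orthogonalProjection Xbᗮ (a : EuclideanSpace ℝ (Fin n))‖) ^ (-μ) ≤
          m ^ (-μ) * (1 + ‖a‖) ^ (-μ) := by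
        have h3 := Real.rpow_le_rpow_of_nonpos
          (by positivity : (0:ℝ) < m * (1 + ‖a‖)) (hma a) (neg_nonpos.mpr hμ0.le)
        rwa [Real.mul_rpow hm0.le (by positivity)] at h3
      have e2 : (1 + ‖orthogonalProjection Xbᗮ (w : EuclideanSpace ℝ (Fin n))‖) ^ μ ≤
          (1 + ‖w‖) ^ μ := by
        apply Real.rpow_le_rpow (by positivity) _ hμ0.le
        have h4 : ‖(orthogonalProjection Xbᗮ (w : EuclideanSpace ℝ (Fin n)) : Xbᗮ)‖ ≤
            ‖(w : EuclideanSpace ℝ (Fin n))‖ := by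
          calc ‖(orthogonalProjection Xbᗮ (w : EuclideanSpace ℝ (Fin n)) : Xbᗮ)‖
              ≤ ‖orthogonalProjection Xbᗮ‖ * ‖(w : EuclideanSpace ℝ (Fin n))‖ :=
                ContinuousLinearMap.le_opNorm _ _
            _ ≤ 1 * ‖(w : EuclideanSpace ℝ (Fin n))‖ :=
                mul_le_mul_of_nonneg_right (orthogonalProjection_norm_le _) (norm_nonneg _)
            _ = ‖(w : EuclideanSpace ℝ (Fin n))‖ := one_mul _
        have : ‖(w : EuclideanSpace ℝ (Fin n))‖ = ‖w‖ := rfl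
        linarith
      calc (1 + ‖orthogonalProjection Xbᗮ ((a : EuclideanSpace ℝ (Fin n)) + w)‖) ^ (-μ)
          = (1 + ‖orthogonalProjection Xbᗮ (a : EuclideanSpace ℝ (Fin n)) +
              orthogonalProjection Xbᗮ (w : EuclideanSpace ℝ (Fin n))‖) ^ (-μ) := by
            rw [hsplit]
        _ ≤ (1 + ‖orthogonalProjection Xbᗮ (a : EuclideanSpace ℝ (Fin n))‖) ^ (-μ) *
              (1 + ‖orthogonalProjection Xbᗮ (w : EuclideanSpace ℝ (Fin n))‖) ^ μ :=
            my_peetre hμ0.le _ _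
        _ ≤ (m ^ (-μ) * (1 + ‖a‖) ^ (-μ)) * (1 + ‖w‖) ^ μ :=
            mul_le_mul e1 e2 (by positivity) (by positivity)
    calc ‖V (orthogonalProjection Xbᗮ ((a : EuclideanSpace ℝ (Fin n)) + w))‖ * ‖ψ w‖ ^ 2
        ≤ (δ * (1 + ‖orthogonalProjection Xbᗮ ((a : EuclideanSpace ℝ (Fin n)) + w)‖) ^ (-μ)) *
            ‖ψ w‖ ^ 2 :=
          mul_le_mul_of_nonneg_right (hV _) (by positivity)
      _ ≤ (δ * ((m ^ (-μ) * (1 + ‖a‖) ^ (-μ)) * (1 + ‖w‖) ^ μ)) * ‖ψ w‖ ^ 2 := by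
          have := hP
          have hδ' := hδ.le
          gcongr
      _ = (δ * m ^ (-μ)) * ((1 + ‖a‖) ^ (-μ) * g w) := by
          rw [hgdef]; ring
  -- integrability of `g`
  have hgInt : Integrable g := by
    obtain ⟨C, hC0, hC⟩ := ψ.decay 0 0
    have hCb : ∀ w, ‖ψ w‖ ≤ C := by
      intro w
      have := hC w
      simpa [norm_iteratedFDeriv_zero] using this
    set k := ⌈μ⌉₊ with hkdef
    have hbd : ∀ w : Xaᗮ, ‖g w‖ ≤
        (C * 2 ^ k) * ‖ψ w‖ + (C * 2 ^ k) * (‖w‖ ^ k * ‖ψ w‖) := by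
      intro w
      rw [Real.norm_of_nonneg (hg0 w), hgdef]
      have h1 : (1 + ‖w‖) ^ μ ≤ 2 ^ k * (1 + ‖w‖ ^ k) := by
        calc (1 + ‖w‖) ^ μ ≤ (1 + ‖w‖) ^ (k:ℝ) :=
              Real.rpow_le_rpow_of_exponent_le (by linarith [norm_nonneg w]) (Nat.le_ceil μ)
          _ = (1 + ‖w‖) ^ k := Real.rpow_natCast _ _
          _ ≤ 2 ^ k * (1 + ‖w‖ ^ k) := my_pow_bound (norm_nonneg w) k
      have h2 : ‖ψ w‖ ^ 2 ≤ C * ‖ψ w‖ := by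
        nlinarith [hCb w, norm_nonneg (ψ w)]
      calc (1 + ‖w‖) ^ μ * ‖ψ w‖ ^ 2 ≤ (2 ^ k * (1 + ‖w‖ ^ k)) * (C * ‖ψ w‖) :=
            mul_le_mul h1 h2 (by positivity) (by positivity)
        _ = (C * 2 ^ k) * ‖ψ w‖ + (C * 2 ^ k) * (‖w‖ ^ k * ‖ψ w‖) := by ring
    refine Integrable.mono' ?_ ?_ (Filter.Eventually.of_forall hbd)
    · exact (ψ.integrable.norm.const_mul _).add ((ψ.integrable_pow_mul volume k).const_mul _)
    · have : Continuous g := by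
        rw [hgdef]
        exact (Continuous.rpow_const (continuous_const.add continuous_norm)
          fun _ => Or.inr hμ0.le).mul ((ψ.continuous.norm).pow 2)
      exact this.aestronglyMeasurable
  -- integrability of the dominating function on the product
  have hI1 : Integrable (fun a : Xa => (1 + ‖a‖) ^ (-μ)) := integrable_one_add_norm hμ
  have hD : Integrable (fun z : Xa × Xaᗮ =>
      (δ * m ^ (-μ)) * ((1 + ‖z.1‖) ^ (-μ) * g z.2)) ((volume : Measure Xa).prod volume) :=
    (hI1.mul_prod hgInt).const_mul _
  -- measurability of the integrand on the product
  have hcontsum : Continuous (fun z : Xa × Xaᗮ =>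
      (z.1 : EuclideanSpace ℝ (Fin n)) + (z.2 : EuclideanSpace ℝ (Fin n))) :=
    (continuous_subtype_val.comp continuous_fst).add
      (continuous_subtype_val.comp continuous_snd)
  have hmeas_h : Measurable (fun z : Xa × Xaᗮ =>
      V (orthogonalProjection Xbᗮ ((z.1 : EuclideanSpace ℝ (Fin n)) + z.2)) *
        (‖ψ z.2‖ : ℂ) ^ 2) := by
    refine Measurable.mul ?_ ?_
    · exact hVmeas.comp (((orthogonalProjection Xbᗮ).continuous.comp hcontsum).measurable)
    · exact ((Complex.continuous_ofReal.comp
        ((ψ.continuous.comp continuous_snd).norm)).pow 2).measurable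
  -- integrability on the product
  have hIntH : Integrable (fun z : Xa × Xaᗮ =>
      V (orthogonalProjection Xbᗮ ((z.1 : EuclideanSpace ℝ (Fin n)) + z.2)) *
        (‖ψ z.2‖ : ℂ) ^ 2) ((volume : Measure Xa).prod volume) :=
    Integrable.mono' hD hmeas_h.aestronglyMeasurable
      (Filter.Eventually.of_forall fun z => hbound z.1 z.2)
  have mp := my_measurePreserving_add n Xa
  -- the projection onto Xaᗮ of a sum
  have hproj : ∀ z : Xa × Xaᗮ,
      orthogonalProjection Xaᗮ ((z.1 : EuclideanSpace ℝ (Fin n)) + z.2) = z.2 := by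
    intro z
    rw [map_add, orthogonalProjection_mem_subspace_eq_self]
    have h0 : orthogonalProjection Xaᗮ (z.1 : EuclideanSpace ℝ (Fin n)) = 0 := by
      rw [orthogonalProjection_eq_zero_iff, Submodule.orthogonal_orthogonal]
      exact z.1.2
    rw [h0, zero_add]
  refine ⟨?_, ?_, ?_⟩
  · -- integrability on the full space
    have hFm : AEStronglyMeasurable (fun x : EuclideanSpace ℝ (Fin n) =>
        V (orthogonalProjection Xbᗮ x) * (‖ψ (orthogonalProjection Xaᗮ x)‖ : ℂ) ^ 2) volume := by
      refine Measurable.aestronglyMeasurable (Measurable.mul ?_ ?_)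
      · exact hVmeas.comp (orthogonalProjection Xbᗮ).continuous.measurable
      · exact ((Complex.continuous_ofReal.comp
          ((ψ.continuous.comp (orthogonalProjection Xaᗮ).continuous).norm)).pow 2).measurable
    refine (mp.integrable_comp hFm).mp ?_
    have hcomp : ((fun x : EuclideanSpace ℝ (Fin n) =>
        V (orthogonalProjection Xbᗮ x) * (‖ψ (orthogonalProjection Xaᗮ x)‖ : ℂ) ^ 2) ∘
        (fun z : Xa × Xaᗮ =>
          (z.1 : EuclideanSpace ℝ (Fin n)) + (z.2 : EuclideanSpace ℝ (Fin n)))) =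
        fun z : Xa × Xaᗮ =>
          V (orthogonalProjection Xbᗮ ((z.1 : EuclideanSpace ℝ (Fin n)) + z.2)) *
            (‖ψ z.2‖ : ℂ) ^ 2 := by
      funext z
      simp only [Function.comp_apply, hproj z]
    rw [hcomp]
    exact hIntH
  · -- integrability of each slice
    intro xa
    refine Integrable.mono' (hgInt.const_mul (δ * m ^ (-μ) * (1 + ‖xa‖) ^ (-μ))) ?_
      (Filter.Eventually.of_forall fun w => ?_)
    · exact (hmeas_h.comp (measurable_const.prodMk measurable_id)).aestronglyMeasurable
    · calc ‖V (orthogonalProjection Xbᗮ ((xa : EuclideanSpace ℝ (Fin n)) + w)) *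
          (‖ψ w‖ : ℂ) ^ 2‖ ≤ (δ * m ^ (-μ)) * ((1 + ‖xa‖) ^ (-μ) * g w) := hbound xa w
        _ = δ * m ^ (-μ) * (1 + ‖xa‖) ^ (-μ) * g w := by ring
  · -- integrability of the effective interaction
    have hVeq : Veff = fun xa : Xa => ∫ w : Xaᗮ,
        V (orthogonalProjection Xbᗮ ((xa : EuclideanSpace ℝ (Fin n)) + w)) *
          (‖ψ w‖ : ℂ) ^ 2 := funext fun xa => hVeff xa
    rw [hVeq]
    exact hIntH.integral_prod_left
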